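/- Let Ω ⊂ ℝ² be a bounded domain contained in the ball B(0,R), and for ε > 0 define V_ε(x) = (1/χ)[ln(ε²/(ε²+π|x|²)²) - (1/|Ω|)∫_Ω ln(ε²/(ε²+π|y|²)²) dy]. Then ∫_Ω V_ε = 0, and the Dirichlet energy satisfies (χ/2)∫_Ω |∇V_ε|² = (8π²/χ)∫_Ω |x|²/(ε²+π|x|²)² dx ≤ (8π/χ)[ln(ε²+πR²) - 2 ln ε + ε²/(ε²+πR²) - 1]. -/

import Mathlib

open MeasureTheory Real Set

private lemma radial_int (ε R : ℝ) (hε : 0 < ε) (hR : 0 < R) :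
    ∫ r in (0:ℝ)..R, r^3/(ε^2+π*r^2)^2
      = (1/(2*π^2)) * (Real.log (ε^2+π*R^2) - Real.log (ε^2) + ε^2/(ε^2+π*R^2) - 1) := by
  have hπ := pi_pos
  have hg : ∀ r : ℝ, 0 < ε^2 + π*r^2 := fun r => by positivity
  have key : ∀ r ∈ uIcc (0:ℝ) R, HasDerivAt
      (fun r => (1/(2*π^2)) * (Real.log (ε^2+π*r^2) + ε^2/(ε^2+π*r^2)))
      (r^3/(ε^2+π*r^2)^2) r := by
    intro r _
    have hg' : HasDerivAt (fun r : ℝ => ε^2 + π*r^2) (π*(2*r)) r := by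
      simpa using ((hasDerivAt_pow 2 r).const_mul π).const_add (ε^2)
    have h1 : HasDerivAt (fun r : ℝ => Real.log (ε^2+π*r^2)) ((π*(2*r))/(ε^2+π*r^2)) r :=
      hg'.log (hg r).ne'
    have h2 : HasDerivAt (fun r : ℝ => ε^2/(ε^2+π*r^2))
        (ε^2 * (-(π*(2*r)) / (ε^2+π*r^2)^2)) r := by
      simpa [div_eq_mul_inv] using (hg'.inv (hg r).ne').const_mul (ε^2)
    refine ((h1.add h2).const_mul (1/(2*π^2))).congr_deriv ?_
    field_simp
    ring
  rw [intervalIntegral.integral_eq_sub_of_hasDerivAt key ?_]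
  · rw [show π*(0:ℝ)^2 = 0 by ring]
    have h1 : ε^2 ≠ 0 := by positivity
    have h2 : ε^2 + π*R^2 ≠ 0 := (hg R).ne'
    field_simp
    ring
  · apply Continuous.intervalIntegrable
    have : ∀ r:ℝ, (ε^2+π*r^2)^2 ≠ 0 := fun r => by positivity
    exact (continuous_pow 3).div
      (((continuous_const.add (continuous_const.mul (continuous_pow 2))).pow 2)) this

private lemma ball_int (ε R : ℝ) (hε : 0 < ε) (hR : 0 < R) :
    ∫ x in Metric.ball (0 : EuclideanSpace ℝ (Fin 2)) R, ‖x‖^2/(ε^2+π*‖x‖^2)^2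
      = (2*π) * ∫ r in (0:ℝ)..R, r^3/(ε^2+π*r^2)^2 := by
  have hπ := pi_pos
  set q : ℝ × ℝ → ℝ :=
    ({p : ℝ×ℝ | p.1^2+p.2^2 < R^2}).indicator
      (fun p : ℝ×ℝ => (p.1^2+p.2^2)/(ε^2+π*(p.1^2+p.2^2))^2) with hq
  have hnorm : ∀ x : EuclideanSpace ℝ (Fin 2), ‖x‖^2 = (x 0)^2 + (x 1)^2 := by
    intro x
    rw [EuclideanSpace.norm_eq, sq_sqrt (by positivity)]
    simp [Fin.sum_univ_two]
  have hmem : ∀ x : EuclideanSpace ℝ (Fin 2), x ∈ Metric.ball 0 R ↔ (x 0)^2 + (x 1)^2 < R^2 := by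
    intro x
    rw [Metric.mem_ball, dist_zero_right, ← hnorm, ← sq_abs ‖x‖, ← sq_abs R,
      pow_lt_pow_iff_left₀ (abs_nonneg _) (abs_nonneg _) two_ne_zero,
      abs_of_nonneg (norm_nonneg _), abs_of_pos hR]
  have T := (volume_preserving_finTwoArrow ℝ).comp
    (EuclideanSpace.volume_preserving_symm_measurableEquiv_toLp (Fin 2))
  have step1 : ∫ x in Metric.ball (0 : EuclideanSpace ℝ (Fin 2)) R, ‖x‖^2/(ε^2+π*‖x‖^2)^2
      = ∫ p : ℝ × ℝ, q p := by
    rw [← integral_indicator measurableSet_ball,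
      ← T.integral_comp (((MeasurableEquiv.toLp 2 (Fin 2 → ℝ)).symm.trans
        MeasurableEquiv.finTwoArrow).measurableEmbedding) q]
    congr 1
    ext x
    by_cases h : x ∈ Metric.ball (0 : EuclideanSpace ℝ (Fin 2)) R
    · rw [Set.indicator_of_mem h, hq, Set.indicator_of_mem (by
        simpa [MeasurableEquiv.finTwoArrow] using (hmem x).1 h)]
      simp [MeasurableEquiv.finTwoArrow, hnorm x]
    · rw [Set.indicator_of_notMem h, hq, Set.indicator_of_notMem (by
        simpa [MeasurableEquiv.finTwoArrow] using
          fun hc => h ((hmem x).2 hc))]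
  have hgr : ∀ r : ℝ, (0:ℝ) < ε^2 + π*r^2 := fun r => by positivity
  set φ : ℝ → ℝ := fun r => r^2/(ε^2+π*r^2)^2 with hφ
  have step2 : ∫ p : ℝ × ℝ, q p
      = (∫ r in Ioi (0:ℝ), r * (Ioo (-R) R).indicator φ r) * (2*π) := by
    rw [← integral_comp_polarCoord_symm q, polarCoord_target]
    have hp : ∀ p : ℝ × ℝ, p.1 • q (polarCoord.symm p)
        = (fun r => r * (Ioo (-R) R).indicator φ r) p.1 * (fun _ : ℝ => (1:ℝ)) p.2 := by
      intro p
      have hsq : (p.1 * Real.cos p.2)^2 + (p.1 * Real.sin p.2)^2 = p.1^2 := by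
        have := Real.sin_sq_add_cos_sq p.2
        nlinarith [this]
      have hiff : p.1^2 < R^2 ↔ p.1 ∈ Ioo (-R) R := by
        rw [mem_Ioo, ← abs_lt, ← sq_abs p.1, ← sq_abs R,
          pow_lt_pow_iff_left₀ (abs_nonneg _) (abs_nonneg _) two_ne_zero, abs_of_pos hR]
      by_cases h : p.1^2 < R^2
      · rw [hq, Set.indicator_of_mem (by simp [polarCoord_symm_apply, hsq, h])]
        simp only [polarCoord_symm_apply, hsq, smul_eq_mul]
        rw [Set.indicator_of_mem (hiff.1 h), hφ]
        ring
      · rw [hq, Set.indicator_of_notMem (by simp [polarCoord_symm_apply, hsq, h])]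
        simp only [smul_eq_mul, mul_zero]
        rw [Set.indicator_of_notMem (fun hc => h (hiff.2 hc))]
        ring
    rw [integral_congr_ae (ae_of_all _ fun p => by
      show p.1 • q (polarCoord.symm p) = _; rw [hp p])]
    rw [Measure.volume_eq_prod,
      setIntegral_prod_mul (fun r => r * (Ioo (-R) R).indicator φ r) (fun _ => (1:ℝ))
        (Ioi 0) (Ioo (-π) π)]
    congr 1
    rw [setIntegral_const, Real.volume_real_Ioo_of_le (by linarith), smul_eq_mul, mul_one]
    ring
  have step3 : (∫ r in Ioi (0:ℝ), r * (Ioo (-R) R).indicator φ r)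
      = ∫ r in (0:ℝ)..R, r^3/(ε^2+π*r^2)^2 := by
    have he : ∀ r:ℝ, r * (Ioo (-R) R).indicator φ r
        = (Ioo (-R) R).indicator (fun r => r * φ r) r := by
      intro r; by_cases h : r ∈ Ioo (-R) R
      · rw [Set.indicator_of_mem h, Set.indicator_of_mem h]
      · rw [Set.indicator_of_notMem h, Set.indicator_of_notMem h, mul_zero]
    rw [integral_congr_ae (ae_of_all _ he), setIntegral_indicator measurableSet_Ioo]
    have hset : Ioi (0:ℝ) ∩ Ioo (-R) R = Ioo 0 R := by
      ext x; simp only [mem_inter_iff, mem_Ioi, mem_Ioo]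
      constructor
      · rintro ⟨h1, h2, h3⟩; exact ⟨h1, h3⟩
      · rintro ⟨h1, h2⟩; exact ⟨h1, by linarith, h2⟩
    rw [hset, intervalIntegral.integral_of_le hR.le, integral_Ioc_eq_integral_Ioo]
    refine setIntegral_congr_fun measurableSet_Ioo fun r _ => ?_
    rw [hφ]; ring
  rw [step1, step2, step3]; ring

theorem stmt9 (χ ε R : ℝ) (hχ : 0 < χ) (hε : 0 < ε) (hR : 0 < R)
    (Ω : Set (EuclideanSpace ℝ (Fin 2))) (hΩm : MeasurableSet Ω)
    (hΩb : Ω ⊆ Metric.ball 0 R) (hΩpos : 0 < (volume Ω).toReal)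
    (Vε : EuclideanSpace ℝ (Fin 2) → ℝ)
    (hV : ∀ x, Vε x = (1 / χ) * (Real.log (ε ^ 2 / (ε ^ 2 + π * ‖x‖ ^ 2) ^ 2)
      - (1 / (volume Ω).toReal) *
          ∫ y in Ω, Real.log (ε ^ 2 / (ε ^ 2 + π * ‖y‖ ^ 2) ^ 2))) :
    (∫ x in Ω, Vε x) = 0 ∧
    (χ / 2) * ∫ x in Ω, ‖fderiv ℝ Vε x‖ ^ 2 =
      (8 * π ^ 2 / χ) * ∫ x in Ω, ‖x‖ ^ 2 / (ε ^ 2 + π * ‖x‖ ^ 2) ^ 2 ∧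
    (χ / 2) * ∫ x in Ω, ‖fderiv ℝ Vε x‖ ^ 2 ≤
      (8 * π / χ) * (Real.log (ε ^ 2 + π * R ^ 2) - 2 * Real.log ε
        + ε ^ 2 / (ε ^ 2 + π * R ^ 2) - 1) := by
  have hπ := pi_pos
  have hg : ∀ y : EuclideanSpace ℝ (Fin 2), (0:ℝ) < ε^2 + π*‖y‖^2 := fun y => by positivity
  set m := (volume Ω).toReal with hm
  set c := (1/m) * ∫ y in Ω, Real.log (ε^2/(ε^2+π*‖y‖^2)^2) with hc
  -- integrability of log on Ω
  have hlogcont : Continuous fun y : EuclideanSpace ℝ (Fin 2) =>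
      Real.log (ε^2/(ε^2+π*‖y‖^2)^2) := by
    apply continuous_iff_continuousAt.2
    intro y
    apply (Real.continuousAt_log (by positivity)).comp
    apply ContinuousAt.div continuousAt_const
    · exact ((continuous_const.add (continuous_const.mul
        ((continuous_norm).pow 2))).pow 2).continuousAt
    · positivity
  have hloginn : IntegrableOn (fun y : EuclideanSpace ℝ (Fin 2) =>
      Real.log (ε^2/(ε^2+π*‖y‖^2)^2)) Ω := by
    apply (hlogcont.continuousOn.integrableOn_compact (isCompact_closedBall
      (0 : EuclideanSpace ℝ (Fin 2)) R)).mono_set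
    exact hΩb.trans Metric.ball_subset_closedBall
  have hΩfin : volume Ω < ⊤ :=
    lt_of_le_of_lt (measure_mono (hΩb.trans Metric.ball_subset_closedBall))
      (measure_closedBall_lt_top)
  -- Part 1
  have part1 : (∫ x in Ω, Vε x) = 0 := by
    have : ∀ x, Vε x = (1/χ) * (Real.log (ε^2/(ε^2+π*‖x‖^2)^2) - c) := fun x => hV x
    rw [integral_congr_ae (ae_of_all _ fun x => this x)]
    rw [integral_const_mul, integral_sub hloginn (integrableOn_const hΩfin.ne),
      setIntegral_const, smul_eq_mul, hc]
    have hm0 : m ≠ 0 := hΩpos.ne'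
    field_simp
    simp [hm, measureReal_def]
  -- Part 2 : pointwise derivative norm
  have hnormsq : ∀ x, ‖fderiv ℝ Vε x‖ ^ 2 = (16*π^2/χ^2) * (‖x‖^2/(ε^2+π*‖x‖^2)^2) := by
    intro x
    have hVeq : Vε = fun y => (1/χ) * ((Real.log (ε^2) - 2 * Real.log (ε^2 + π*‖y‖^2)) - c) := by
      funext y
      rw [hV y, Real.log_div (by positivity) (by positivity), Real.log_pow]
      norm_num
    have hD : HasFDerivAt Vε ((-4*π/(χ*(ε^2+π*‖x‖^2))) • (innerSL ℝ x)) x := by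
      rw [hVeq]
      have h1 : HasFDerivAt (fun y : EuclideanSpace ℝ (Fin 2) => ‖y‖^2) (2 • innerSL ℝ x) x :=
        (hasStrictFDerivAt_norm_sq x).hasFDerivAt
      have h2 : HasFDerivAt (fun y : EuclideanSpace ℝ (Fin 2) => ε^2 + π*‖y‖^2)
          (π • (2 • innerSL ℝ x)) x := (h1.const_mul π).const_add (ε^2)
      have h3 := h2.log (hg x).ne'
      have h4 := (((hasFDerivAt_const (Real.log (ε^2)) x).sub
        (h3.const_mul 2)).sub_const c).const_mul (1/χ)
      refine h4.congr_fderiv ?_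
      ext y
      simp only [ContinuousLinearMap.smul_apply, ContinuousLinearMap.coe_smul', Pi.smul_apply,
        ContinuousLinearMap.zero_apply, ContinuousLinearMap.coe_sub', Pi.sub_apply,
        smul_eq_mul, zero_sub]
      simp only [ContinuousLinearMap.neg_apply, ContinuousLinearMap.smul_apply, smul_eq_mul,
        nsmul_eq_mul, Nat.cast_ofNat]
      field_simp
      ring
    rw [hD.fderiv, norm_smul, mul_pow, innerSL_apply_norm, Real.norm_eq_abs, sq_abs]
    have h1 : χ ≠ 0 := hχ.ne'
    have h2 : ε^2 + π*‖x‖^2 ≠ 0 := (hg x).ne'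
    field_simp
    ring
  have part2 : (χ / 2) * ∫ x in Ω, ‖fderiv ℝ Vε x‖ ^ 2 =
      (8 * π ^ 2 / χ) * ∫ x in Ω, ‖x‖ ^ 2 / (ε ^ 2 + π * ‖x‖ ^ 2) ^ 2 := by
    rw [integral_congr_ae (ae_of_all _ hnormsq), integral_const_mul]
    have h1 : χ ≠ 0 := hχ.ne'
    field_simp
    ring
  refine ⟨part1, part2, ?_⟩
  -- Part 3
  rw [part2]
  have hWint : IntegrableOn (fun x : EuclideanSpace ℝ (Fin 2) =>
      ‖x‖^2/(ε^2+π*‖x‖^2)^2) (Metric.ball 0 R) := by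
    have hWc : Continuous fun x : EuclideanSpace ℝ (Fin 2) => ‖x‖^2/(ε^2+π*‖x‖^2)^2 :=
      ((continuous_norm).pow 2).div
        ((continuous_const.add (continuous_const.mul ((continuous_norm).pow 2))).pow 2)
        (fun x => by positivity)
    exact (hWc.continuousOn.integrableOn_compact (isCompact_closedBall
      (0 : EuclideanSpace ℝ (Fin 2)) R)).mono_set Metric.ball_subset_closedBall
  have hmono : (∫ x in Ω, ‖x‖ ^ 2 / (ε ^ 2 + π * ‖x‖ ^ 2) ^ 2)
      ≤ ∫ x in Metric.ball (0 : EuclideanSpace ℝ (Fin 2)) R, ‖x‖^2/(ε^2+π*‖x‖^2)^2 :=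
    setIntegral_mono_set hWint (ae_of_all _ fun x => by positivity)
      (HasSubset.Subset.eventuallyLE hΩb)
  have hball := ball_int ε R hε hR
  have hrad := radial_int ε R hε hR
  have hcoef : (0:ℝ) ≤ 8 * π ^ 2 / χ := by positivity
  calc (8 * π ^ 2 / χ) * ∫ x in Ω, ‖x‖ ^ 2 / (ε ^ 2 + π * ‖x‖ ^ 2) ^ 2
      ≤ (8 * π ^ 2 / χ) * ∫ x in Metric.ball (0 : EuclideanSpace ℝ (Fin 2)) R,
          ‖x‖^2/(ε^2+π*‖x‖^2)^2 := mul_le_mul_of_nonneg_left hmono hcoef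
    _ = (8 * π / χ) * (Real.log (ε ^ 2 + π * R ^ 2) - 2 * Real.log ε
        + ε ^ 2 / (ε ^ 2 + π * R ^ 2) - 1) := by
        rw [hball, hrad, show Real.log (ε^2) = 2 * Real.log ε by
          rw [Real.log_pow]; norm_num]
        have h1 : χ ≠ 0 := hχ.ne'
        have h2 : π ≠ 0 := hπ.ne'
        field_simp
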